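/- Let n ≥ 1 and let k be an integer with 1 ≤ k ≤ n, f = k/n, and 0 < ε₁ ≤ ε₂ with ε₂/ε₁ ≥ R = 1 + 8/(ε₁² n f). Then there exists an ε-DP Markov kernel M from [−1/2,1/2]^n to [−1/2,1/2] (with privacy vector ε_i = ε₁ for 1 ≤ i ≤ k and ε_i = ε₂ for k < i ≤ n) whose worst-case error satisfies E(M) ≤ min{ R/(4n(f + (1−f)R)), 1/4 } = min{ (n f ε₁² + 8)/(4n(n f ε₁² + 8(1−f))), 1/4 }. -/

import Mathlib

open MeasureTheory ProbabilityTheory Real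

noncomputable section

abbrev UnitI : Set ℝ := Set.Icc (-(1:ℝ)/2) (1/2)

abbrev Dataset (n : ℕ) : Type := Fin n → UnitI

def INeighbor {n : ℕ} (i : Fin n) (x x' : Dataset n) : Prop :=
  ∀ j : Fin n, j ≠ i → x j = x' j

def IsDP {n : ℕ} {Y : Type} [MeasurableSpace Y]
    (ε : Fin n → ℝ) (M : Kernel (Dataset n) Y) : Prop :=
  ∀ i : Fin n, ∀ x x' : Dataset n, INeighbor i x x' →
    ∀ S : Set Y, MeasurableSet S →
      M x S ≤ ENNReal.ofReal (Real.exp (ε i)) * M x' S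

def meanOf (P : Measure UnitI) : ℝ := ∫ z, (z : ℝ) ∂P

def errOf {n : ℕ} (M : Kernel (Dataset n) UnitI) (P : Measure UnitI) : ℝ :=
  ∫ x, (∫ y, ((y : ℝ) - meanOf P)^2 ∂(M x)) ∂(Measure.pi fun _ : Fin n => P)

def wcError {n : ℕ} (M : Kernel (Dataset n) UnitI) : ℝ :=
  ⨆ P : {P : Measure UnitI // IsProbabilityMeasure P}, errOf M P.1

def minimaxRisk (n : ℕ) (ε : Fin n → ℝ) : ℝ :=
  ⨅ M : {M : Kernel (Dataset n) UnitI // IsMarkovKernel M ∧ IsDP ε M}, wcError M.1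

def twoGroup (n k : ℕ) (ε₁ ε₂ : ℝ) : Fin n → ℝ :=
  fun i => if (i : ℕ) < k then ε₁ else ε₂


open Set
open scoped NNReal ENNReal

namespace UB

/-- one-sided moment integrability -/
lemma intOn_pow_exp {c : ℝ} (hc : 0 < c) (j : ℕ) :
    IntegrableOn (fun t : ℝ => t ^ j * Real.exp (-(c * t))) (Ioi 0) := by
  have := integrableOn_rpow_mul_exp_neg_mul_rpow (s := (j : ℝ)) (p := 1) (b := c)
    (by exact lt_of_lt_of_le (by norm_num) (Nat.cast_nonneg j)) one_pos hc
  simpa [Real.rpow_natCast, Real.rpow_one, neg_mul] using this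

lemma intOn_pow_exp_val {c : ℝ} (hc : 0 < c) (j : ℕ) :
    ∫ t in Ioi (0:ℝ), t ^ j * Real.exp (-(c * t)) = (Nat.factorial j : ℝ) / c ^ (j + 1) := by
  have := integral_rpow_mul_exp_neg_mul_rpow (p := 1) (q := (j:ℝ)) (b := c)
    one_pos (by exact lt_of_lt_of_le (by norm_num) (Nat.cast_nonneg j)) hc
  simp only [Real.rpow_one, Real.rpow_natCast, neg_mul] at this
  rw [this]
  rw [show (-((j:ℝ) + 1) / 1) = -((j:ℝ)+1) by ring,
    show ((j:ℝ) + 1) / 1 = ((j:ℝ) + 1) by ring]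
  rw [Real.rpow_neg hc.le, Real.Gamma_nat_eq_factorial,
    show ((j:ℝ)+1) = ((j+1 : ℕ) : ℝ) by push_cast; ring, Real.rpow_natCast]
  ring

lemma integrable_comp_abs {f : ℝ → ℝ} (hf : IntegrableOn (fun x : ℝ => f |x|) (Ioi 0)) :
    Integrable fun x : ℝ => f |x| := by
  have int_Iic : IntegrableOn (fun x : ℝ ↦ f |x|) (Iic 0) := by
    rw [← Measure.map_neg_eq_self (volume : Measure ℝ)]
    have m : MeasurableEmbedding fun x : ℝ => -x := (Homeomorph.neg ℝ).measurableEmbedding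
    rw [m.integrableOn_map_iff]
    simp_rw [Function.comp_def, abs_neg, neg_preimage, neg_Iic, neg_zero]
    exact (integrableOn_Ici_iff_integrableOn_Ioi (by finiteness)).mpr hf
  have := int_Iic.union hf
  rwa [Iic_union_Ioi, integrableOn_univ] at this

lemma integrable_abs_pow_exp {c : ℝ} (hc : 0 < c) (j : ℕ) :
    Integrable fun y : ℝ => |y| ^ j * Real.exp (-(c * |y|)) := by
  apply integrable_comp_abs (f := fun t => t ^ j * Real.exp (-(c * t)))
  apply (intOn_pow_exp hc j).congr_fun ?_ measurableSet_Ioi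
  intro x hx
  simp [abs_of_pos (show (0:ℝ) < x from hx)]

lemma integrable_pow_exp {c : ℝ} (hc : 0 < c) (j : ℕ) :
    Integrable fun y : ℝ => y ^ j * Real.exp (-(c * |y|)) := by
  refine (integrable_abs_pow_exp hc j).mono' ?_ ?_
  · exact ((measurable_id.pow_const j).mul
      ((measurable_const.mul measurable_abs).neg.exp)).aestronglyMeasurable
  · filter_upwards with y
    rw [Real.norm_eq_abs, abs_mul, abs_pow, abs_of_pos (Real.exp_pos _)]

lemma integral_abs_pow_exp {c : ℝ} (hc : 0 < c) (j : ℕ) :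
    ∫ y : ℝ, |y| ^ j * Real.exp (-(c * |y|)) = 2 * ((Nat.factorial j : ℝ) / c ^ (j + 1)) := by
  rw [integral_comp_abs (f := fun t => t ^ j * Real.exp (-(c * t)))]
  rw [intOn_pow_exp_val hc j]

lemma integral_exp_abs {c : ℝ} (hc : 0 < c) :
    ∫ y : ℝ, Real.exp (-(c * |y|)) = 2 / c := by
  have := integral_abs_pow_exp hc 0
  simpa [Nat.factorial, div_eq_mul_inv] using this

lemma integral_sq_exp_abs {c : ℝ} (hc : 0 < c) :
    ∫ y : ℝ, y ^ 2 * Real.exp (-(c * |y|)) = 4 / c ^ 3 := by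
  have h := integral_abs_pow_exp hc 2
  simp only [sq_abs] at h
  rw [h]; simp [Nat.factorial]; ring

lemma integral_id_exp_abs {c : ℝ} (hc : 0 < c) :
    ∫ y : ℝ, y * Real.exp (-(c * |y|)) = 0 := by
  set F : ℝ → ℝ := fun y => y * Real.exp (-(c * |y|)) with hF
  have hmp : MeasurePreserving (fun x : ℝ => -x) volume volume :=
    ⟨measurable_neg, Measure.map_neg_eq_self volume⟩
  have h1 : ∫ y : ℝ, F (-y) = ∫ y : ℝ, F y :=
    hmp.integral_comp (Homeomorph.neg ℝ).measurableEmbedding F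
  have h2 : ∀ y : ℝ, F (-y) = - F y := by
    intro y; simp [hF, abs_neg]
  simp_rw [h2, integral_neg] at h1
  linarith

end UB

namespace UB2
open UB

/-- Laplace density centered at m with rate c -/
def den (c m y : ℝ) : ℝ := c/2 * Real.exp (-(c * |y - m|))

lemma den_nonneg {c : ℝ} (hc : 0 ≤ c) (m y : ℝ) : 0 ≤ den c m y := by
  unfold den; positivity

lemma den_zero_sub (c m y : ℝ) : den c 0 (y - m) = den c m y := by
  simp [den]

lemma measurable_den (c m : ℝ) : Measurable (den c m) := by
  unfold den
  exact measurable_const.mul (((measurable_id.sub_const m).abs.const_mul c).neg.exp)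

lemma integrable_den0_mul_poly {c : ℝ} (hc : 0 < c) (j : ℕ) :
    Integrable fun u : ℝ => den c 0 u * u ^ j := by
  have h := (integrable_pow_exp hc j).const_mul (c/2)
  apply h.congr
  filter_upwards with u
  simp [den]; ring

lemma integrable_den {c : ℝ} (hc : 0 < c) (m : ℝ) : Integrable (den c m) := by
  have h := (integrable_den0_mul_poly hc 0).comp_sub_right m
  apply h.congr
  filter_upwards with y
  simp [den_zero_sub]

lemma integral_den {c : ℝ} (hc : 0 < c) (m : ℝ) : ∫ y, den c m y = 1 := by
  have hshift := integral_sub_right_eq_self (μ := volume) (den c 0) m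
  simp_rw [den_zero_sub] at hshift
  rw [hshift]
  simp only [den, sub_zero]
  rw [MeasureTheory.integral_const_mul, integral_exp_abs hc]
  field_simp

def lapM (c m : ℝ) : Measure ℝ := volume.withDensity fun y => ENNReal.ofReal (den c m y)

lemma lapM_apply {c m : ℝ} {T : Set ℝ} (hT : MeasurableSet T) :
    lapM c m T = ∫⁻ y in T, ENNReal.ofReal (den c m y) := by
  rw [lapM, withDensity_apply _ hT]

instance lapM_prob {c m : ℝ} [hc : Fact (0 < c)] : IsProbabilityMeasure (lapM c m) := by
  constructor
  rw [lapM_apply MeasurableSet.univ, Measure.restrict_univ,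
    ← ofReal_integral_eq_lintegral_ofReal (integrable_den hc.out m)
      (Filter.Eventually.of_forall (den_nonneg hc.out.le m)),
    integral_den hc.out m, ENNReal.ofReal_one]

lemma integral_lapM {c : ℝ} (hc : 0 < c) (m : ℝ) (g : ℝ → ℝ) :
    ∫ y, g y ∂(lapM c m) = ∫ u : ℝ, den c 0 u * g (u + m) := by
  rw [lapM]
  have hd : (fun y => ENNReal.ofReal (den c m y))
      = fun y => ((Real.toNNReal (den c m y) : ℝ≥0) : ℝ≥0∞) := rfl
  rw [hd, integral_withDensity_eq_integral_smul
    ((measurable_den c m).real_toNNReal) g]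
  have he : ∀ y, (Real.toNNReal (den c m y) : ℝ≥0) • g y = den c m y * g y := by
    intro y
    rw [NNReal.smul_def, Real.coe_toNNReal _ (den_nonneg hc.le _ _), smul_eq_mul]
  simp_rw [he]
  have hshift := integral_sub_right_eq_self (μ := volume)
    (fun u => den c 0 u * g (u + m)) m
  rw [← hshift]
  congr 1; ext y
  rw [den_zero_sub, sub_add_cancel]

lemma integrable_sq_lapM {c : ℝ} (hc : 0 < c) (m μ : ℝ) :
    Integrable (fun y => (y - μ)^2) (lapM c m) := by
  rw [lapM, integrable_withDensity_iff (measurable_den c m).ennreal_ofReal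
    (Filter.Eventually.of_forall fun y => ENNReal.ofReal_lt_top)]
  have key : Integrable fun u : ℝ => ((u + m) - μ)^2 * den c 0 u := by
    have h2 := integrable_den0_mul_poly hc 2
    have h1 := integrable_den0_mul_poly hc 1
    have h0 := integrable_den0_mul_poly hc 0
    have := ((h2.add ((h1.const_mul (2*(m - μ))))).add
      ((h0.const_mul ((m - μ)^2))))
    apply this.congr
    filter_upwards with u
    simp only [Pi.add_apply, pow_one, pow_zero, mul_one]
    ring
  have := key.comp_sub_right m
  apply this.congr
  filter_upwards with y
  rw [sub_add_cancel, den_zero_sub, ENNReal.toReal_ofReal (den_nonneg hc.le m y)]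

lemma integral_sq_lapM {c : ℝ} (hc : 0 < c) (m μ : ℝ) :
    ∫ y, (y - μ)^2 ∂(lapM c m) = (m - μ)^2 + 2/c^2 := by
  rw [integral_lapM hc m]
  have h2 : Integrable (fun u : ℝ => c/2 * (u^2 * Real.exp (-(c * |u|)))) volume :=
    (integrable_pow_exp hc 2).const_mul _
  have h1 : Integrable (fun u : ℝ => (2*(m-μ))*(c/2) * (u^1 * Real.exp (-(c * |u|)))) volume :=
    (integrable_pow_exp hc 1).const_mul _
  have h0 : Integrable (fun u : ℝ => ((m-μ)^2*(c/2)) * (u^0 * Real.exp (-(c * |u|)))) volume :=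
    (integrable_pow_exp hc 0).const_mul _
  have h21 : Integrable (fun u : ℝ => c/2 * (u^2 * Real.exp (-(c * |u|)))
      + (2*(m-μ))*(c/2) * (u^1 * Real.exp (-(c * |u|)))) volume := h2.add h1
  have hrw : (fun u : ℝ => den c 0 u * ((u + m) - μ)^2)
      = fun u : ℝ => (c/2 * (u^2 * Real.exp (-(c * |u|)))
        + (2*(m-μ))*(c/2) * (u^1 * Real.exp (-(c * |u|))))
        + ((m-μ)^2*(c/2)) * (u^0 * Real.exp (-(c * |u|))) := by
    ext u; simp only [den, sub_zero, pow_one, pow_zero]; ring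
  rw [hrw, integral_add h21 h0, integral_add h2 h1,
    MeasureTheory.integral_const_mul, MeasureTheory.integral_const_mul,
    MeasureTheory.integral_const_mul]
  have v1 : ∫ u : ℝ, u ^ 1 * Real.exp (-(c*|u|)) = 0 := by
    simp only [pow_one]; exact integral_id_exp_abs hc
  have v0 : ∫ u : ℝ, u ^ 0 * Real.exp (-(c*|u|)) = 2 / c := by
    simp only [pow_zero, one_mul]; exact integral_exp_abs hc
  rw [integral_sq_exp_abs hc, v1, v0]
  field_simp
  ring

lemma lapM_le {c : ℝ} (hc : 0 < c) {m m' Δ : ℝ} (hΔ : |m - m'| ≤ Δ)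
    {T : Set ℝ} (hT : MeasurableSet T) :
    lapM c m T ≤ ENNReal.ofReal (Real.exp (c * Δ)) * lapM c m' T := by
  rw [lapM_apply hT, lapM_apply hT,
    ← lintegral_const_mul' _ _ ENNReal.ofReal_ne_top]
  refine lintegral_mono fun y => ?_
  dsimp only
  rw [← ENNReal.ofReal_mul (Real.exp_pos _).le]
  apply ENNReal.ofReal_le_ofReal
  unfold den
  rw [show Real.exp (c*Δ) * (c/2 * Real.exp (-(c * |y - m'|)))
      = c/2 * Real.exp (c*Δ - c * |y - m'|) by rw [show c*Δ - c * |y - m'| = c*Δ + -(c * |y - m'|) by ring, Real.exp_add]; ring]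
  have htri : |y - m| ≥ |y - m'| - Δ := by
    have : |y - m'| ≤ |y - m| + |m - m'| := by
      have := abs_add_le (y - m) (m - m')
      simpa using this
    linarith
  have : -(c * |y - m|) ≤ c*Δ - c * |y - m'| := by nlinarith
  have := Real.exp_le_exp.mpr this
  nlinarith [Real.exp_pos (-(c * |y - m|))]

end UB2

namespace UB3
open UB UB2 Set

variable {n : ℕ}

def wmean (w : Fin n → ℝ) (x : Dataset n) : ℝ := ∑ i, w i * (x i : ℝ)

lemma measurable_wmean (w : Fin n → ℝ) : Measurable (wmean (n := n) w) := by
  apply Finset.measurable_sum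
  intro i _
  exact (measurable_subtype_coe.comp (measurable_pi_apply i)).const_mul (w i)

lemma wmean_abs_le {w : Fin n → ℝ} (hw0 : ∀ i, 0 ≤ w i) (hw1 : ∑ i, w i = 1)
    (x : Dataset n) : |wmean w x| ≤ 1/2 := by
  calc |wmean w x| ≤ ∑ i, |w i * (x i : ℝ)| := Finset.abs_sum_le_sum_abs _ _
    _ ≤ ∑ i, w i * (1/2) := by
        apply Finset.sum_le_sum
        intro i _
        rw [abs_mul, abs_of_nonneg (hw0 i)]
        have h1 := (x i).2.1
        have h2 := (x i).2.2
        have : |(x i : ℝ)| ≤ 1/2 := abs_le.mpr ⟨by linarith, by linarith⟩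
        exact mul_le_mul_of_nonneg_left this (hw0 i)
    _ = 1/2 := by rw [← Finset.sum_mul, hw1, one_mul]

lemma wmean_sens {w : Fin n → ℝ} (hw0 : ∀ i, 0 ≤ w i) {i : Fin n}
    {x x' : Dataset n} (h : INeighbor i x x') :
    |wmean w x - wmean w x'| ≤ w i := by
  have hd : wmean w x - wmean w x' = ∑ j, (w j * (x j : ℝ) - w j * (x' j : ℝ)) := by
    rw [wmean, wmean, ← Finset.sum_sub_distrib]
  have hs : ∑ j, (w j * (x j : ℝ) - w j * (x' j : ℝ)) = w i * (x i : ℝ) - w i * (x' i : ℝ) := by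
    apply Finset.sum_eq_single_of_mem i (Finset.mem_univ i)
    intro j _ hj
    rw [h j hj]; ring
  rw [hd, hs, ← mul_sub, abs_mul, abs_of_nonneg (hw0 i)]
  have h1 := (x i).2.1
  have h2 := (x i).2.2
  have h3 := (x' i).2.1
  have h4 := (x' i).2.2
  have : |(x i : ℝ) - (x' i : ℝ)| ≤ 1 := abs_le.mpr ⟨by linarith, by linarith⟩
  calc w i * |(x i : ℝ) - (x' i : ℝ)| ≤ w i * 1 := mul_le_mul_of_nonneg_left this (hw0 i)
    _ = w i := mul_one _

def proj : ℝ → UnitI := fun y => Set.projIcc (-(1:ℝ)/2) (1/2) (by norm_num) y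

lemma measurable_proj : Measurable proj := by
  unfold proj
  exact continuous_projIcc.measurable

lemma proj_dist_le {μ : ℝ} (hμ : |μ| ≤ 1/2) (z : ℝ) :
    ((proj z : ℝ) - μ)^2 ≤ (z - μ)^2 := by
  rw [abs_le] at hμ
  have hv : (proj z : ℝ) = max (-(1:ℝ)/2) (min (1/2) z) := rfl
  rw [hv]
  rcases le_total z (-(1:ℝ)/2) with h | h
  · rw [min_eq_right (le_trans h (by norm_num)), max_eq_left h]
    nlinarith
  · rcases le_total z (1/2 : ℝ) with h' | h'
    · rw [min_eq_right h', max_eq_right h]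
    · rw [min_eq_left h', max_eq_right (by norm_num [le_trans (by norm_num : -(1:ℝ)/2 ≤ 1/2) h'])]
      nlinarith

def mechFun (c : ℝ) (w : Fin n → ℝ) : Dataset n → Measure UnitI :=
  fun x => (lapM c (wmean w x)).map proj

lemma measurable_mechFun (c : ℝ) (w : Fin n → ℝ) : Measurable (mechFun (n := n) c w) := by
  apply Measure.measurable_of_measurable_coe
  intro S hS
  have hps : MeasurableSet (proj ⁻¹' S) := measurable_proj hS
  simp_rw [mechFun, Measure.map_apply measurable_proj hS, lapM_apply hps]
  have hjoint : Measurable fun p : Dataset n × ℝ =>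
      ENNReal.ofReal (den c (wmean w p.1) p.2) := by
    apply ENNReal.measurable_ofReal.comp
    unfold den
    exact measurable_const.mul
      ((((measurable_snd.sub ((measurable_wmean w).comp measurable_fst)).abs.const_mul c).neg).exp)
  exact hjoint.lintegral_prod_right'

def mech (c : ℝ) (w : Fin n → ℝ) : Kernel (Dataset n) UnitI :=
  ⟨mechFun c w, measurable_mechFun c w⟩

lemma mech_apply (c : ℝ) (w : Fin n → ℝ) (x : Dataset n) :
    mech c w x = (lapM c (wmean w x)).map proj := rfl

lemma mech_markov {c : ℝ} (hc : 0 < c) (w : Fin n → ℝ) : IsMarkovKernel (mech c w) := by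
  haveI : Fact (0 < c) := ⟨hc⟩
  constructor
  intro x
  rw [mech_apply]
  exact Measure.isProbabilityMeasure_map measurable_proj.aemeasurable

lemma mech_dp {c : ℝ} (hc : 0 < c) {w : Fin n → ℝ} (hw0 : ∀ i, 0 ≤ w i)
    {ε : Fin n → ℝ} (hε : ∀ i, c * w i ≤ ε i) :
    IsDP ε (mech c w) := by
  intro i x x' hne S hS
  rw [mech_apply, mech_apply, Measure.map_apply measurable_proj hS,
    Measure.map_apply measurable_proj hS]
  have hsens := wmean_sens hw0 hne
  calc lapM c (wmean w x) (proj ⁻¹' S)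
      ≤ ENNReal.ofReal (Real.exp (c * w i)) * lapM c (wmean w x') (proj ⁻¹' S) :=
        lapM_le hc hsens (measurable_proj hS)
    _ ≤ ENNReal.ofReal (Real.exp (ε i)) * lapM c (wmean w x') (proj ⁻¹' S) := by
        apply mul_le_mul_left
        exact ENNReal.ofReal_le_ofReal (Real.exp_le_exp.mpr (hε i))

lemma meanOf_abs_le (P : Measure UnitI) [IsProbabilityMeasure P] :
    |meanOf P| ≤ 1/2 := by
  rw [meanOf]
  have := norm_integral_le_of_norm_le_const (μ := P)
    (f := fun z : UnitI => (z : ℝ)) (C := 1/2) ?_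
  · simpa [measure_univ] using this
  · filter_upwards with z
    have h1 := z.2.1
    have h2 := z.2.2
    rw [Real.norm_eq_abs]
    exact abs_le.mpr ⟨by linarith, by linarith⟩

lemma integrable_coord (P : Measure UnitI) [IsProbabilityMeasure P] :
    Integrable (fun z : UnitI => (z : ℝ)) P := by
  refine (integrable_const ((1:ℝ)/2)).mono'
    measurable_subtype_coe.aestronglyMeasurable ?_
  filter_upwards with z
  have h1 := z.2.1
  have h2 := z.2.2
  rw [Real.norm_eq_abs]
  exact abs_le.mpr ⟨by linarith, by linarith⟩

lemma integrable_coord_sq (P : Measure UnitI) [IsProbabilityMeasure P] (μ : ℝ) :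
    Integrable (fun z : UnitI => ((z : ℝ) - μ)^2) P := by
  refine (integrable_const ((1/2 + |μ|)^2)).mono'
    ((measurable_subtype_coe.sub_const μ).pow_const 2).aestronglyMeasurable ?_
  filter_upwards with z
  have h1 := z.2.1
  have h2 := z.2.2
  have hz : |(z : ℝ)| ≤ 1/2 := abs_le.mpr ⟨by linarith, by linarith⟩
  have : |(z:ℝ) - μ| ≤ 1/2 + |μ| := by
    calc |(z:ℝ) - μ| ≤ |(z:ℝ)| + |μ| := abs_sub _ _
      _ ≤ 1/2 + |μ| := by linarith
  rw [Real.norm_eq_abs, abs_of_nonneg (sq_nonneg _), ← sq_abs]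
  exact pow_le_pow_left₀ (abs_nonneg _) this 2

lemma var_term (P : Measure UnitI) [IsProbabilityMeasure P] :
    ∫ z : UnitI, ((z : ℝ) - meanOf P)^2 ∂P ≤ 1/4 := by
  set μ := meanOf P with hμ
  have hexp : (fun z : UnitI => ((z:ℝ) - μ)^2)
      = fun z : UnitI => ((z:ℝ)^2 - 2*μ*(z:ℝ)) + μ^2 := by
    ext z; ring
  have hz2 : Integrable (fun z : UnitI => (z:ℝ)^2) P := by
    have := integrable_coord_sq P 0
    simpa using this
  have hz1 := integrable_coord P
  have hB : Integrable (fun z : UnitI => 2*μ*(z:ℝ)) P := hz1.const_mul (2*μ)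
  have hA : Integrable (fun z : UnitI => (z:ℝ)^2 - 2*μ*(z:ℝ)) P := hz2.sub hB
  rw [hexp, integral_add hA (integrable_const _),
    integral_sub hz2 hB, MeasureTheory.integral_const_mul,
    integral_const, probReal_univ]
  have hmean : ∫ z : UnitI, (z : ℝ) ∂P = μ := rfl
  rw [hmean]
  have hsq : ∫ z : UnitI, (z:ℝ)^2 ∂P ≤ 1/4 := by
    have hle : ∀ z : UnitI, (z:ℝ)^2 ≤ 1/4 := by
      intro z
      have h1 := z.2.1
      have h2 := z.2.2
      nlinarith
    calc ∫ z : UnitI, (z:ℝ)^2 ∂P ≤ ∫ _ : UnitI, (1/4 : ℝ) ∂P :=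
        integral_mono hz2 (integrable_const _) hle
      _ = 1/4 := by rw [integral_const, probReal_univ]; simp
  simp only [ENNReal.toReal_one, smul_eq_mul, one_mul]
  nlinarith

lemma wcError_le {M : Kernel (Dataset n) UnitI} {B : ℝ}
    (h : ∀ P : Measure UnitI, IsProbabilityMeasure P → errOf M P ≤ B) : wcError M ≤ B := by
  have hne : Nonempty {P : Measure UnitI // IsProbabilityMeasure P} :=
    ⟨⟨Measure.dirac ⟨0, by constructor <;> norm_num⟩, inferInstance⟩⟩
  exact ciSup_le fun P => h P.1 P.2

lemma inner_bound {c : ℝ} (hc : 0 < c) (w : Fin n → ℝ) (x : Dataset n)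
    {μ : ℝ} (hμ : |μ| ≤ 1/2) :
    ∫ y, ((y : ℝ) - μ)^2 ∂(mech c w x) ≤ (wmean w x - μ)^2 + 2/c^2 := by
  rw [mech_apply]
  rw [integral_map (f := fun y : UnitI => ((y:ℝ) - μ)^2) measurable_proj.aemeasurable
    (((continuous_subtype_val.sub continuous_const).pow 2).aestronglyMeasurable)]
  have hle : ∫ z : ℝ, ((proj z : ℝ) - μ)^2 ∂(lapM c (wmean w x))
      ≤ ∫ z : ℝ, (z - μ)^2 ∂(lapM c (wmean w x)) := by
    apply integral_mono_of_nonneg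
    · filter_upwards with z; positivity
    · exact integrable_sq_lapM hc _ μ
    · filter_upwards with z; exact proj_dist_le hμ z
  calc (∫ z : ℝ, ((proj z : ℝ) - μ)^2 ∂(lapM c (wmean w x))) ≤ _ := hle
    _ = (wmean w x - μ)^2 + 2/c^2 := integral_sq_lapM hc _ μ

lemma integral_two_coords (P : Measure UnitI) [hP : IsProbabilityMeasure P]
    {i j : Fin n} (hij : i ≠ j) (g h : UnitI → ℝ)
    (hg : Integrable g P) (hh : Integrable h P) :
    ∫ x : Dataset n, g (x i) * h (x j) ∂(Measure.pi fun _ : Fin n => P)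
      = (∫ z, g z ∂P) * (∫ z, h z ∂P) := by
  letI : MeasureSpace UnitI := { volume := P }
  haveI : IsProbabilityMeasure (volume : Measure UnitI) := hP
  set F : Fin n → UnitI → ℝ := fun l z => if l = i then g z else if l = j then h z else 1 with hF
  have hFint : ∀ l, Integrable (F l) (volume : Measure UnitI) := by
    intro l
    rw [hF]; dsimp only
    split
    · exact hg
    · split
      · exact hh
      · exact integrable_const 1
  have hprod : ∀ x : Dataset n, g (x i) * h (x j) = ∏ l, F l (x l) := by
    intro x
    have h1 : ∏ l, F l (x l) = F i (x i) * ∏ l ∈ Finset.univ.erase i, F l (x l) :=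
      (Finset.mul_prod_erase Finset.univ _ (Finset.mem_univ i)).symm
    have h2 : ∏ l ∈ Finset.univ.erase i, F l (x l)
        = F j (x j) * ∏ l ∈ (Finset.univ.erase i).erase j, F l (x l) :=
      (Finset.mul_prod_erase _ _ (Finset.mem_erase.mpr ⟨hij.symm, Finset.mem_univ j⟩)).symm
    have h3 : ∏ l ∈ (Finset.univ.erase i).erase j, F l (x l) = 1 := by
      apply Finset.prod_eq_one
      intro l hl
      rw [Finset.mem_erase, Finset.mem_erase] at hl
      simp [hF, hl.2.1, hl.1]
    rw [h1, h2, h3, mul_one]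
    simp [hF, hij.symm]
  have hvol : (Measure.pi fun _ : Fin n => P) = (volume : Measure (Dataset n)) := by
    rw [volume_pi]; rfl
  rw [hvol]
  simp_rw [hprod]
  rw [volume_pi, MeasureTheory.integral_fintype_prod_eq_prod F]
  have g1 : ∏ l, ∫ z, F l z = (∫ z, F i z) * ∏ l ∈ Finset.univ.erase i, ∫ z, F l z :=
    (Finset.mul_prod_erase Finset.univ _ (Finset.mem_univ i)).symm
  have g2 : ∏ l ∈ Finset.univ.erase i, ∫ z, F l z
      = (∫ z, F j z) * ∏ l ∈ (Finset.univ.erase i).erase j, ∫ z, F l z :=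
    (Finset.mul_prod_erase _ _ (Finset.mem_erase.mpr ⟨hij.symm, Finset.mem_univ j⟩)).symm
  have g3 : ∏ l ∈ (Finset.univ.erase i).erase j, ∫ z, F l z = 1 := by
    apply Finset.prod_eq_one
    intro l hl
    rw [Finset.mem_erase, Finset.mem_erase] at hl
    simp [hF, hl.2.1, hl.1]
  rw [g1, g2, g3, mul_one]
  have e1 : ∫ z, F i z = ∫ z, g z ∂P := by simp only [hF, if_pos rfl]; exact rfl
  have e2 : ∫ z, F j z = ∫ z, h z ∂P := by
    simp only [hF, if_neg hij.symm, if_pos rfl]; exact rfl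
  rw [e1, e2]

lemma integral_one_coord (P : Measure UnitI) [hP : IsProbabilityMeasure P]
    (i : Fin n) (g : UnitI → ℝ) (hg : Integrable g P) :
    ∫ x : Dataset n, g (x i) ∂(Measure.pi fun _ : Fin n => P) = ∫ z, g z ∂P := by
  letI : MeasureSpace UnitI := { volume := P }
  haveI : IsProbabilityMeasure (volume : Measure UnitI) := hP
  set F : Fin n → UnitI → ℝ := fun l z => if l = i then g z else 1 with hF
  have hprod : ∀ x : Dataset n, g (x i) = ∏ l, F l (x l) := by
    intro x
    have h1 : ∏ l, F l (x l) = F i (x i) * ∏ l ∈ Finset.univ.erase i, F l (x l) :=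
      (Finset.mul_prod_erase Finset.univ _ (Finset.mem_univ i)).symm
    have h3 : ∏ l ∈ Finset.univ.erase i, F l (x l) = 1 := by
      apply Finset.prod_eq_one
      intro l hl
      rw [Finset.mem_erase] at hl
      simp [hF, hl.1]
    rw [h1, h3, mul_one]
    simp [hF]
  have hvol : (Measure.pi fun _ : Fin n => P) = (volume : Measure (Dataset n)) := by
    rw [volume_pi]; rfl
  rw [hvol]
  simp_rw [hprod]
  rw [volume_pi, MeasureTheory.integral_fintype_prod_eq_prod F]
  have g1 : ∏ l, ∫ z, F l z = (∫ z, F i z) * ∏ l ∈ Finset.univ.erase i, ∫ z, F l z :=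
    (Finset.mul_prod_erase Finset.univ _ (Finset.mem_univ i)).symm
  have g3 : ∏ l ∈ Finset.univ.erase i, ∫ z, F l z = 1 := by
    apply Finset.prod_eq_one
    intro l hl
    rw [Finset.mem_erase] at hl
    simp [hF, hl.1]
  rw [g1, g3, mul_one]
  simp only [hF, if_pos rfl]
  exact rfl

lemma mech_err {c : ℝ} (hc : 0 < c) {w : Fin n → ℝ} (hw0 : ∀ i, 0 ≤ w i)
    (hw1 : ∑ i, w i = 1) (P : Measure UnitI) [IsProbabilityMeasure P] :
    errOf (mech c w) P ≤ (∑ i, (w i)^2) / 4 + 2/c^2 := by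
  set μ := meanOf P with hμdef
  have hμ : |μ| ≤ 1/2 := meanOf_abs_le P
  have hμ' := abs_le.mp hμ
  haveI : IsProbabilityMeasure (Measure.pi fun _ : Fin n => P) := by infer_instance
  have hsqdom : ∀ x : Dataset n, (wmean w x - μ)^2 ≤ 1 := by
    intro x
    have h1 := abs_le.mp (wmean_abs_le hw0 hw1 x)
    nlinarith
  have hsqmeas : Measurable (fun x : Dataset n => (wmean w x - μ)^2) :=
    ((measurable_wmean w).sub_const μ).pow_const 2
  have hsqint : Integrable (fun x : Dataset n => (wmean w x - μ)^2)
      (Measure.pi fun _ : Fin n => P) := by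
    refine (integrable_const (1:ℝ)).mono' hsqmeas.aestronglyMeasurable ?_
    filter_upwards with x
    rw [Real.norm_eq_abs, abs_of_nonneg (sq_nonneg _)]
    exact hsqdom x
  have step1 : errOf (mech c w) P
      ≤ ∫ x, ((wmean w x - μ)^2 + 2/c^2) ∂(Measure.pi fun _ : Fin n => P) := by
    rw [errOf, ← hμdef]
    apply integral_mono_of_nonneg
    · filter_upwards with x
      exact integral_nonneg fun y => sq_nonneg _
    · exact hsqint.add (integrable_const _)
    · filter_upwards with x
      exact inner_bound hc w x hμ
  have hmean0 : ∫ z : UnitI, ((z:ℝ) - μ) ∂P = 0 := by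
    rw [integral_sub (integrable_coord P) (integrable_const μ), integral_const,
      probReal_univ]
    have : ∫ z : UnitI, (z:ℝ) ∂P = μ := rfl
    rw [this]; simp
  have hcoordint : Integrable (fun z : UnitI => (z:ℝ) - μ) P :=
    (integrable_coord P).sub (integrable_const μ)
  have hvar : ∫ x, (wmean w x - μ)^2 ∂(Measure.pi fun _ : Fin n => P)
      ≤ (∑ i, (w i)^2)/4 := by
    have hrw : ∀ x : Dataset n, (wmean w x - μ)^2
        = ∑ i, ∑ j, (w i * ((x i : ℝ) - μ)) * (w j * ((x j : ℝ) - μ)) := by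
      intro x
      rw [← Finset.sum_mul_sum]
      have hms : wmean w x - μ = ∑ i, w i * ((x i : ℝ) - μ) := by
        simp_rw [mul_sub]
        rw [Finset.sum_sub_distrib, ← Finset.sum_mul, hw1, one_mul, wmean]
      rw [hms]; ring
    simp_rw [hrw]
    have hint_term : ∀ i j : Fin n, Integrable
        (fun x : Dataset n => (w i * ((x i : ℝ) - μ)) * (w j * ((x j : ℝ) - μ)))
        (Measure.pi fun _ : Fin n => P) := by
      intro i j
      have hbi : ∀ (x : Dataset n) (l : Fin n), |(x l : ℝ) - μ| ≤ 1 := by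
        intro x l
        have h1 := (x l).2.1; have h2 := (x l).2.2
        exact abs_le.mpr ⟨by linarith, by linarith⟩
      refine (integrable_const (|w i| * |w j|)).mono' ?_ ?_
      · exact ((((measurable_subtype_coe.comp (measurable_pi_apply i)).sub_const μ).const_mul
          (w i)).mul
          (((measurable_subtype_coe.comp (measurable_pi_apply j)).sub_const μ).const_mul
          (w j))).aestronglyMeasurable
      · filter_upwards with x
        rw [Real.norm_eq_abs, abs_mul, abs_mul, abs_mul]
        have hb1 : |w i| * |(x i:ℝ) - μ| ≤ |w i| * 1 :=
          mul_le_mul_of_nonneg_left (hbi x i) (abs_nonneg _)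
        have hb2 : |w j| * |(x j:ℝ) - μ| ≤ |w j| * 1 :=
          mul_le_mul_of_nonneg_left (hbi x j) (abs_nonneg _)
        calc |w i| * |(x i:ℝ) - μ| * (|w j| * |(x j:ℝ) - μ|)
            ≤ |w i| * 1 * (|w j| * 1) :=
              mul_le_mul hb1 hb2 (by positivity) (by positivity)
          _ = |w i| * |w j| := by ring
    rw [integral_finset_sum _ (fun i _ => integrable_finset_sum _ (fun j _ => hint_term i j))]
    have hswap : ∀ i : Fin n,
        ∫ x, (∑ j, (w i * ((x i : ℝ) - μ)) * (w j * ((x j : ℝ) - μ)))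
          ∂(Measure.pi fun _ : Fin n => P)
        = ∑ j, ∫ x, (w i * ((x i : ℝ) - μ)) * (w j * ((x j : ℝ) - μ))
          ∂(Measure.pi fun _ : Fin n => P) := fun i =>
      integral_finset_sum _ (fun j _ => hint_term i j)
    simp_rw [hswap]
    have hoff : ∀ i j : Fin n, i ≠ j →
        ∫ x : Dataset n, (w i * ((x i : ℝ) - μ)) * (w j * ((x j : ℝ) - μ))
          ∂(Measure.pi fun _ : Fin n => P) = 0 := by
      intro i j hij
      rw [integral_two_coords P hij (fun z => w i * ((z:ℝ) - μ)) (fun z => w j * ((z:ℝ) - μ))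
        (hcoordint.const_mul _) (hcoordint.const_mul _)]
      rw [MeasureTheory.integral_const_mul, hmean0]
      simp
    have hdiag : ∀ i : Fin n,
        ∫ x : Dataset n, (w i * ((x i : ℝ) - μ)) * (w i * ((x i : ℝ) - μ))
          ∂(Measure.pi fun _ : Fin n => P) ≤ (w i)^2 / 4 := by
      intro i
      have hgint : Integrable (fun z : UnitI => (w i * ((z:ℝ) - μ)) * (w i * ((z:ℝ) - μ))) P := by
        have := (integrable_coord_sq P μ).const_mul ((w i)^2)
        apply this.congr
        filter_upwards with z
        ring
      rw [integral_one_coord P i _ hgint]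
      have : ∫ z : UnitI, (w i * ((z:ℝ) - μ)) * (w i * ((z:ℝ) - μ)) ∂P
          = (w i)^2 * ∫ z : UnitI, ((z:ℝ) - μ)^2 ∂P := by
        rw [← MeasureTheory.integral_const_mul]
        congr 1; ext z; ring
      rw [this]
      have hv := var_term P
      rw [← hμdef] at hv
      have hw2 : (0:ℝ) ≤ (w i)^2 := sq_nonneg _
      calc (w i)^2 * ∫ z : UnitI, ((z:ℝ) - μ)^2 ∂P ≤ (w i)^2 * (1/4) := by
            apply mul_le_mul_of_nonneg_left hv hw2
        _ = (w i)^2/4 := by ring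
    calc ∑ i, ∑ j, ∫ x, (w i * ((x i : ℝ) - μ)) * (w j * ((x j : ℝ) - μ))
          ∂(Measure.pi fun _ : Fin n => P)
        = ∑ i, ∫ x, (w i * ((x i : ℝ) - μ)) * (w i * ((x i : ℝ) - μ))
          ∂(Measure.pi fun _ : Fin n => P) := by
          apply Finset.sum_congr rfl
          intro i _
          exact Finset.sum_eq_single_of_mem i (Finset.mem_univ i)
            (fun j _ hj => hoff i j (Ne.symm hj))
      _ ≤ ∑ i, (w i)^2/4 := Finset.sum_le_sum (fun i _ => hdiag i)
      _ = (∑ i, (w i)^2)/4 := by rw [Finset.sum_div]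
  have hfin : ∫ x, ((wmean w x - μ)^2 + 2/c^2) ∂(Measure.pi fun _ : Fin n => P)
      = (∫ x, (wmean w x - μ)^2 ∂(Measure.pi fun _ : Fin n => P)) + 2/c^2 := by
    rw [integral_add hsqint (integrable_const _), integral_const, probReal_univ]
    simp
  rw [hfin] at step1
  linarith

lemma err_dirac (P : Measure UnitI) [IsProbabilityMeasure P] :
    errOf (Kernel.const (Dataset n) (Measure.dirac (⟨0, by constructor <;> norm_num⟩ : UnitI))) P
      ≤ 1/4 := by
  rw [errOf]
  simp_rw [Kernel.const_apply]
  have hin : ∫ y : UnitI, ((y:ℝ) - meanOf P)^2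
      ∂(Measure.dirac (⟨0, by constructor <;> norm_num⟩ : UnitI))
      = (meanOf P)^2 := by
    rw [integral_dirac]
    norm_num
  simp_rw [hin]
  haveI : IsProbabilityMeasure (Measure.pi fun _ : Fin n => P) := by infer_instance
  rw [integral_const, probReal_univ]
  have := abs_le.mp (meanOf_abs_le P)
  simp only [ENNReal.toReal_one, smul_eq_mul, one_mul]
  nlinarith

end UB3

namespace UB4

lemma card_filter_lt (n k : ℕ) (hkn : k ≤ n) :
    (Finset.univ.filter fun i : Fin n => (i:ℕ) < k).card = k := by
  have he : (Finset.univ.filter fun i : Fin n => (i:ℕ) < k)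
      = Finset.map (Fin.castLEEmb hkn) Finset.univ := by
    ext i
    simp only [Finset.mem_filter, Finset.mem_univ, true_and]
    rw [Finset.mem_map]
    constructor
    · intro hi
      exact ⟨⟨(i:ℕ), hi⟩, Finset.mem_univ _, Fin.ext (by simp [Fin.castLEEmb])⟩
    · rintro ⟨j, -, rfl⟩
      simpa [Fin.castLEEmb] using j.2
  rw [he, Finset.card_map, Finset.card_univ, Fintype.card_fin]

lemma sum_ite_val (n k : ℕ) (hkn : k ≤ n) (a b : ℝ) :
    ∑ i : Fin n, (if (i:ℕ) < k then a else b) = (k:ℝ) * a + ((n:ℝ) - k) * b := by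
  classical
  rw [Finset.sum_ite, Finset.sum_const, Finset.sum_const, card_filter_lt n k hkn]
  have hadd := Finset.card_filter_add_card_filter_not
    (s := (Finset.univ : Finset (Fin n))) (p := fun i : Fin n => (i:ℕ) < k)
  rw [card_filter_lt n k hkn, Finset.card_univ, Fintype.card_fin] at hadd
  have hcard : ((Finset.univ.filter fun i : Fin n => ¬ (i:ℕ) < k).card : ℝ) = (n:ℝ) - k := by
    have : (Finset.univ.filter fun i : Fin n => ¬ (i:ℕ) < k).card = n - k := by omega
    rw [this, Nat.cast_sub hkn]
  rw [nsmul_eq_mul, nsmul_eq_mul, hcard]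

end UB4

theorem upper_bound_regime_B
    (n k : ℕ) (hn : 1 ≤ n) (hk1 : 1 ≤ k) (hkn : k ≤ n)
    (ε₁ ε₂ f R : ℝ)
    (hε₁ : 0 < ε₁) (hε₁₂ : ε₁ ≤ ε₂)
    (hf : f = (k : ℝ) / n)
    (hR : R = 1 + 8 / (ε₁ ^ 2 * n * f))
    (hrR : R ≤ ε₂ / ε₁) :
    min (R / (4 * n * (f + (1 - f) * R))) (1 / 4)
      = min ((n * f * ε₁ ^ 2 + 8) / (4 * n * (n * f * ε₁ ^ 2 + 8 * (1 - f)))) (1 / 4) ∧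
    ∃ M : Kernel (Dataset n) UnitI, IsMarkovKernel M ∧
      IsDP (twoGroup n k ε₁ ε₂) M ∧
      wcError M ≤ min (R / (4 * n * (f + (1 - f) * R))) (1 / 4) := by
  classical
  have hn0 : (0:ℝ) < n := by exact_mod_cast Nat.lt_of_lt_of_le Nat.zero_lt_one hn
  have hk0 : (0:ℝ) < k := by exact_mod_cast Nat.lt_of_lt_of_le Nat.zero_lt_one hk1
  have hkn' : (k:ℝ) ≤ (n:ℝ) := by exact_mod_cast hkn
  have hf0 : 0 < f := by rw [hf]; positivity
  have hq : ε₁ ^ 2 * n * f = ε₁^2 * k := by rw [hf]; field_simp; try ring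
  have hRk : R = 1 + 8/(ε₁^2 * k) := by rw [hR, hq]
  have hR1 : 1 < R := by
    rw [hRk]
    have : 0 < 8/(ε₁^2*(k:ℝ)) := by positivity
    linarith
  have hR0 : 0 < R := by linarith
  set D : ℝ := (k:ℝ) + ((n:ℝ) - k) * R with hD
  have hDpos : 0 < D := by
    have : 0 ≤ ((n:ℝ) - k) * R := mul_nonneg (by linarith) (by linarith)
    rw [hD]; linarith
  have hden : (n:ℝ) * (f + (1 - f) * R) = D := by
    rw [hf, hD]; field_simp; try ring
  have hnf : (n:ℝ) * f = k := by rw [hf]; field_simp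
  have h1 : 4 * (n:ℝ) * (f + (1 - f) * R) = 4 * D := by
    rw [mul_assoc, hden]
  have harg : R / (4 * n * (f + (1 - f) * R))
      = (n * f * ε₁ ^ 2 + 8) / (4 * n * (n * f * ε₁ ^ 2 + 8 * (1 - f))) := by
    have h2 : (n:ℝ) * f * ε₁^2 + 8 = (k:ℝ)*ε₁^2 + 8 := by rw [hnf]
    have h3 : 4 * (n:ℝ) * ((n:ℝ) * f * ε₁ ^ 2 + 8 * (1 - f))
        = 4*((n:ℝ)*(k:ℝ)*ε₁^2 + 8*((n:ℝ)-(k:ℝ))) := by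
      rw [hnf, hf]; field_simp; try ring
    rw [h1, h2, h3]
    have hpos1 : (0:ℝ) < 4 * D := by linarith
    have hpos2 : (0:ℝ) < 4*((n:ℝ)*(k:ℝ)*ε₁^2 + 8*((n:ℝ)-(k:ℝ))) := by
      nlinarith [mul_pos (mul_pos hn0 hk0) (pow_pos hε₁ 2)]
    rw [div_eq_div_iff hpos1.ne' hpos2.ne', hD, hRk]
    field_simp
    ring
  refine ⟨by rw [harg], ?_⟩
  by_cases hcase : R / (4 * n * (f + (1 - f) * R)) ≤ 1/4
  · -- Laplace mechanism case
    set w : Fin n → ℝ := fun i => if (i:ℕ) < k then 1/D else R/D with hw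
    set c : ℝ := D * ε₁ with hcdef
    have hc : 0 < c := by rw [hcdef]; positivity
    have hw0 : ∀ i, 0 ≤ w i := by
      intro i; rw [hw]; dsimp only
      split
      · positivity
      · positivity
    have hw1 : ∑ i, w i = 1 := by
      rw [hw]
      rw [UB4.sum_ite_val n k hkn (1/D) (R/D)]
      field_simp
      try rw [hD]
      try ring
    have hsum2 : ∑ i, (w i)^2 = (k:ℝ)*(1/D)^2 + ((n:ℝ)-k)*(R/D)^2 := by
      rw [hw]
      have hsq : ∀ i : Fin n, ((if (i:ℕ) < k then 1/D else R/D))^2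
          = if (i:ℕ) < k then (1/D)^2 else (R/D)^2 := by
        intro i; split <;> rfl
      simp_rw [hsq]
      exact UB4.sum_ite_val n k hkn _ _
    have hεw : ∀ i : Fin n, c * w i ≤ twoGroup n k ε₁ ε₂ i := by
      intro i
      rw [hw, hcdef, twoGroup]
      dsimp only
      by_cases hik : (i:ℕ) < k
      · rw [if_pos hik, if_pos hik]
        apply le_of_eq
        field_simp
      · rw [if_neg hik, if_neg hik]
        have hRe : R * ε₁ ≤ ε₂ := (le_div_iff₀ hε₁).mp hrR
        calc D * ε₁ * (R/D) = R * ε₁ := by field_simp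
          _ ≤ ε₂ := hRe
    have hbound : (∑ i, (w i)^2)/4 + 2/c^2 = R / (4 * D) := by
      rw [hsum2, hcdef]
      have h8 : (8:ℝ)/ε₁^2 = k*(R - 1) := by
        rw [hRk]; field_simp; try ring
      have key : (k:ℝ) + ((n:ℝ)-k)*R^2 + 8/ε₁^2 = R * D := by
        rw [h8, hD]; ring
      have hD2 : (0:ℝ) < 4*D^2 := by positivity
      have hDD : (0:ℝ) < 4*D := by linarith
      calc ((k:ℝ)*(1/D)^2 + ((n:ℝ)-k)*(R/D)^2)/4 + 2/(D*ε₁)^2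
          = ((k:ℝ) + ((n:ℝ)-k)*R^2 + 8/ε₁^2)/(4*D^2) := by
            field_simp
            ring
        _ = (R*D)/(4*D^2) := by rw [key]
        _ = R/(4*D) := by
            rw [div_eq_div_iff hD2.ne' hDD.ne']
            ring
    refine ⟨UB3.mech c w, UB3.mech_markov hc w, UB3.mech_dp hc hw0 hεw, ?_⟩
    have hval : R / (4 * n * (f + (1 - f) * R)) = R / (4 * D) := by rw [h1]
    apply UB3.wcError_le
    intro P hP
    haveI := hP
    have := UB3.mech_err hc hw0 hw1 P
    rw [hbound] at this
    rw [← hval] at this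
    exact le_min this (le_trans this hcase)
  · -- trivial kernel case
    push_neg at hcase
    have h14 : min (R / (4 * n * (f + (1 - f) * R))) (1/4 : ℝ) = 1/4 :=
      min_eq_right hcase.le
    rw [h14]
    refine ⟨Kernel.const _ (Measure.dirac (⟨0, by constructor <;> norm_num⟩ : UnitI)), ?_, ?_, ?_⟩
    · constructor
      intro x
      rw [Kernel.const_apply]
      infer_instance
    · intro i x x' hne S hS
      rw [Kernel.const_apply, Kernel.const_apply]
      have hε0 : 0 ≤ twoGroup n k ε₁ ε₂ i := by
        rw [twoGroup]
        split
        · linarith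
        · linarith
      have h1e : (1:ℝ≥0∞) ≤ ENNReal.ofReal (Real.exp (twoGroup n k ε₁ ε₂ i)) := by
        rw [← ENNReal.ofReal_one]
        apply ENNReal.ofReal_le_ofReal
        calc (1:ℝ) = Real.exp 0 := Real.exp_zero.symm
          _ ≤ _ := Real.exp_le_exp.mpr hε0
      calc (Measure.dirac (⟨0, by constructor <;> norm_num⟩ : UnitI)) S
          = 1 * (Measure.dirac (⟨0, by constructor <;> norm_num⟩ : UnitI)) S := (one_mul _).symm
        _ ≤ ENNReal.ofReal (Real.exp (twoGroup n k ε₁ ε₂ i))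
            * (Measure.dirac (⟨0, by constructor <;> norm_num⟩ : UnitI)) S :=
            mul_le_mul_left h1e _
    · apply UB3.wcError_le
      intro P hP
      haveI := hP
      exact UB3.err_dirac P
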